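/- Lemma 1 (upper bound on the number of high-level advertisements under constant capacity): Suppose Λ·(1 − (u+p)/(m·H^α)) ≥ S, so that high-level advertisement yields demand at least S from every reputation in [0,1]. Define the heuristic advertisement sequence A^h recursively along the constant-capacity trajectory started from R_1 ∈ [0,1] by: A^h_i = L if D(f(R^h_i, L)) ≥ S, and A^h_i = H otherwise. Let h* be the number of periods i with A^h_i = H. Then every advertisement sequence W ∈ {L,H}^N whose number of high-level advertisements is at least h* satisfies Π_S(W, R_1) ≤ Π_S(A^h, R_1). Consequently, the number of high-level advertisements in any optimal sequence is at most h*. -/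
import Mathlib


noncomputable section

/-- Post-advertisement reputation map. -/
def frep (α R a : ℝ) : ℝ := R + (1 - R) * a ^ α

/-- Demand function. -/
def dem (Λ q x : ℝ) : ℝ := if 0 < x then max 0 (Λ * (1 - q / x)) else 0

/-- Constant-capacity reputation trajectory (0-indexed periods), capacity `S`. -/
def repC (α w Λ q S : ℝ) (A : ℕ → ℝ) (R1 : ℝ) : ℕ → ℝ
  | 0 => R1
  | i + 1 =>
      let R' := frep α (repC α w Λ q S A R1 i) (A i)
      let d := dem Λ q R'
      (1 - w) * R' + w * (if 0 < d then min S d / d else R')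

/-- Constant-capacity total profit over horizon `N`. -/
def profitC (α w Λ q S p c cA : ℝ) (A : ℕ → ℝ) (R1 : ℝ) (N : ℕ) : ℝ :=
  ∑ i ∈ Finset.range N,
    (p * min S (dem Λ q (frep α (repC α w Λ q S A R1 i) (A i)))
      - c * S - cA * A i)


/-- The heuristic advertisement decision of Lemma 1: low level iff low-level
advertisement already yields demand at least the capacity `S`. -/
def heurAd (α Λ q S L H : ℝ) (R : ℝ) : ℝ :=
  if S ≤ dem Λ q (frep α R L) then L else H

/-- The reputation trajectory under the heuristic advertisement rule and the
constant-capacity dynamics. -/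
def heurRep (α w Λ q S L H R1 : ℝ) : ℕ → ℝ
  | 0 => R1
  | i + 1 =>
      let R := heurRep α w Λ q S L H R1 i
      let R' := frep α R (heurAd α Λ q S L H R)
      let d := dem Λ q R'
      (1 - w) * R' + w * (if 0 < d then min S d / d else R')

/-- The trajectory `repC` under the heuristic sequence equals `heurRep`. -/
lemma repC_heur (α w Λ q S L H R1 : ℝ) :
    ∀ i, repC α w Λ q S (fun j => heurAd α Λ q S L H (heurRep α w Λ q S L H R1 j)) R1 i
      = heurRep α w Λ q S L H R1 i
  | 0 => rfl
  | i + 1 => by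
    simp only [repC, heurRep, repC_heur α w Λ q S L H R1 i]

/-- Unfolding of `heurRep` at a successor index. -/
lemma heurRep_succ (α w Λ q S L H R1 : ℝ) (i : ℕ) :
    heurRep α w Λ q S L H R1 (i + 1) =
      (1 - w) * frep α (heurRep α w Λ q S L H R1 i)
          (heurAd α Λ q S L H (heurRep α w Λ q S L H R1 i))
        + w * (if 0 < dem Λ q (frep α (heurRep α w Λ q S L H R1 i)
              (heurAd α Λ q S L H (heurRep α w Λ q S L H R1 i))) then
            min S (dem Λ q (frep α (heurRep α w Λ q S L H R1 i)
              (heurAd α Λ q S L H (heurRep α w Λ q S L H R1 i)))) /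
              dem Λ q (frep α (heurRep α w Λ q S L H R1 i)
                (heurAd α Λ q S L H (heurRep α w Λ q S L H R1 i)))
          else frep α (heurRep α w Λ q S L H R1 i)
            (heurAd α Λ q S L H (heurRep α w Λ q S L H R1 i))) := rfl

/-- Sum of an `{L, H}`-valued sequence in terms of the number of `H`s. -/
lemma sumLH (L H : ℝ) (N : ℕ) (V : ℕ → ℝ) (hV : ∀ i, V i = L ∨ V i = H)
    (hLH : L ≠ H) :
    ∑ i ∈ Finset.range N, V i =
      (((Finset.range N).filter (fun i => V i = H)).card : ℝ) * H
        + ((N : ℝ) - (((Finset.range N).filter (fun i => V i = H)).card : ℝ)) * L := by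
  rw [← Finset.sum_filter_add_sum_filter_not (Finset.range N) (fun i => V i = H)]
  have h1 : ∑ i ∈ (Finset.range N).filter (fun i => V i = H), V i =
      (((Finset.range N).filter (fun i => V i = H)).card : ℝ) * H := by
    rw [Finset.sum_congr rfl (fun i hi => (Finset.mem_filter.mp hi).2),
      Finset.sum_const, nsmul_eq_mul]
  have h2 : ∑ i ∈ (Finset.range N).filter (fun i => ¬ V i = H), V i =
      ((((Finset.range N).filter (fun i => ¬ V i = H)).card : ℝ)) * L := by
    rw [Finset.sum_congr rfl (fun i hi => by
        rcases hV i with h | h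
        · exact h
        · exact absurd h (Finset.mem_filter.mp hi).2),
      Finset.sum_const, nsmul_eq_mul]
  have h3 : (((Finset.range N).filter (fun i => V i = H)).card : ℝ)
      + (((Finset.range N).filter (fun i => ¬ V i = H)).card : ℝ) = (N : ℝ) := by
    rw [← Nat.cast_add]
    norm_cast
    rw [Finset.card_filter_add_card_filter_not, Finset.card_range]
  have h4 : (((Finset.range N).filter (fun i => ¬ V i = H)).card : ℝ)
      = (N : ℝ) - (((Finset.range N).filter (fun i => V i = H)).card : ℝ) := by
    linarith
  rw [h1, h2, h4]

/-- Monotonicity of the advertising cost in the number of high ads. -/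
lemma gapLH (x y NN L H : ℝ) (hxy : x ≤ y) (hLH : L ≤ H) :
    x * H + (NN - x) * L ≤ y * H + (NN - y) * L := by nlinarith

/-- A convex combination of two points of `[0, 1]` lies in `[0, 1]`. -/
lemma convex01 (w R' F : ℝ) (hw0 : 0 ≤ w) (hw1 : w ≤ 1) (h0 : 0 ≤ R') (h1 : R' ≤ 1)
    (f0 : 0 ≤ F) (f1 : F ≤ 1) :
    0 ≤ (1 - w) * R' + w * F ∧ (1 - w) * R' + w * F ≤ 1 := by
  constructor <;> nlinarith

/-- Lemma 1: if high-level advertisement yields demand at least `S` from every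
reputation, then any advertisement sequence using at least as many high-level
advertisements as the heuristic rule earns at most the heuristic's profit. -/
theorem upper_bound_on_high_ads_constant_capacity
    (Λ c p cA m u α w L H S q : ℝ) (N : ℕ)
    (hΛ : 0 < Λ) (hc : 0 < c) (hcp : c < p) (hcA : 0 ≤ cA)
    (hm : 0 < m) (hu : 0 ≤ u) (hqdef : q = (u + p) / m) (hq1 : q < 1)
    (hα : 0 < α) (hw0 : 0 ≤ w) (hw1 : w ≤ 1)
    (hL0 : 0 ≤ L) (hLH : L < H) (hH1 : H ≤ 1)
    (hS0 : 0 < S) (hSΛ : S ≤ Λ)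
    (hHdem : S ≤ Λ * (1 - q / H ^ α))
    (R1 : ℝ) (hR10 : 0 ≤ R1) (hR11 : R1 ≤ 1) :
    ∀ W : ℕ → ℝ, (∀ i, W i = L ∨ W i = H) →
      ((Finset.range N).filter
          (fun i => heurAd α Λ q S L H (heurRep α w Λ q S L H R1 i) = H)).card ≤
        ((Finset.range N).filter (fun i => W i = H)).card →
      profitC α w Λ q S p c cA W R1 N ≤
        profitC α w Λ q S p c cA
          (fun i => heurAd α Λ q S L H (heurRep α w Λ q S L H R1 i)) R1 N := by
  intro W hW hcard
  have hp : 0 < p := hc.trans hcp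
  have hH0 : 0 < H := hL0.trans_lt hLH
  have hq0 : 0 < q := by rw [hqdef]; positivity
  have hHα0 : 0 < H ^ α := Real.rpow_pos_of_pos hH0 α
  have hHα1 : H ^ α ≤ 1 := Real.rpow_le_one hH0.le hH1 hα.le
  -- heurAd dichotomy and bounds
  have hAdLH : ∀ R : ℝ, heurAd α Λ q S L H R = L ∨ heurAd α Λ q S L H R = H := by
    intro R; unfold heurAd; split <;> simp
  have hAd0 : ∀ R : ℝ, 0 ≤ heurAd α Λ q S L H R := by
    intro R; rcases hAdLH R with h | h <;> rw [h] <;> linarith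
  have hAd1 : ∀ R : ℝ, heurAd α Λ q S L H R ≤ 1 := by
    intro R; rcases hAdLH R with h | h <;> rw [h] <;> linarith
  -- heuristic trajectory stays in [0,1]
  have hrep : ∀ i, 0 ≤ heurRep α w Λ q S L H R1 i ∧ heurRep α w Λ q S L H R1 i ≤ 1 := by
    intro i
    induction i with
    | zero => exact ⟨hR10, hR11⟩
    | succ i ih =>
      obtain ⟨h0, h1⟩ := ih
      set R := heurRep α w Λ q S L H R1 i with hRdef
      set a := heurAd α Λ q S L H R with hadef
      have haα0 : 0 ≤ a ^ α := Real.rpow_nonneg (hAd0 R) α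
      have haα1 : a ^ α ≤ 1 := Real.rpow_le_one (hAd0 R) (hAd1 R) hα.le
      have hR'0 : 0 ≤ frep α R a := by unfold frep; nlinarith
      have hR'1 : frep α R a ≤ 1 := by unfold frep; nlinarith
      rw [heurRep_succ, ← hRdef, ← hadef]
      set d := dem Λ q (frep α R a) with hddef
      by_cases hd : 0 < d
      · rw [if_pos hd]
        have hmin0 : 0 ≤ min S d := le_min hS0.le hd.le
        have hF0 : 0 ≤ min S d / d := div_nonneg hmin0 hd.le
        have hF1 : min S d / d ≤ 1 := (div_le_one hd).mpr (min_le_right _ _)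
        exact convex01 w _ _ hw0 hw1 hR'0 hR'1 hF0 hF1
      · rw [if_neg hd]
        exact convex01 w _ _ hw0 hw1 hR'0 hR'1 hR'0 hR'1
  -- heuristic demand always at least S
  have hdemS : ∀ R : ℝ, 0 ≤ R → R ≤ 1 →
      S ≤ dem Λ q (frep α R (heurAd α Λ q S L H R)) := by
    intro R h0 h1
    unfold heurAd
    split
    · assumption
    · have hfge : H ^ α ≤ frep α R H := by unfold frep; nlinarith
      have hfpos : 0 < frep α R H := lt_of_lt_of_le hHα0 hfge
      have hdiv : q / frep α R H ≤ q / H ^ α :=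
        div_le_div_of_nonneg_left hq0.le hHα0 hfge
      have hmono : Λ * (1 - q / H ^ α) ≤ Λ * (1 - q / frep α R H) := by nlinarith
      unfold dem
      rw [if_pos hfpos]
      exact le_trans hHdem (le_trans hmono (le_max_right _ _))
  -- profit of the heuristic sequence, exactly
  have hheur : profitC α w Λ q S p c cA
      (fun i => heurAd α Λ q S L H (heurRep α w Λ q S L H R1 i)) R1 N =
      ∑ i ∈ Finset.range N,
        (p * S - c * S - cA * heurAd α Λ q S L H (heurRep α w Λ q S L H R1 i)) := by
    unfold profitC
    refine Finset.sum_congr rfl (fun i _ => ?_)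
    rw [repC_heur]
    rw [min_eq_left (hdemS _ (hrep i).1 (hrep i).2)]
  -- profit of W, bounded above
  have hWle : profitC α w Λ q S p c cA W R1 N ≤
      ∑ i ∈ Finset.range N, (p * S - c * S - cA * W i) := by
    unfold profitC
    refine Finset.sum_le_sum (fun i _ => ?_)
    have : p * min S (dem Λ q (frep α (repC α w Λ q S W R1 i) (W i))) ≤ p * S :=
      mul_le_mul_of_nonneg_left (min_le_left _ _) hp.le
    linarith
  -- compare the advertising costs
  have hAh : ∀ i, heurAd α Λ q S L H (heurRep α w Λ q S L H R1 i) = L ∨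
      heurAd α Λ q S L H (heurRep α w Λ q S L H R1 i) = H := fun i => hAdLH _
  have hsumA := sumLH L H N (fun i => heurAd α Λ q S L H (heurRep α w Λ q S L H R1 i))
    hAh hLH.ne
  have hsumW := sumLH L H N W hW hLH.ne
  set k1 := ((Finset.range N).filter
    (fun i => heurAd α Λ q S L H (heurRep α w Λ q S L H R1 i) = H)).card with hk1
  set k2 := ((Finset.range N).filter (fun i => W i = H)).card with hk2
  have hk12 : (k1 : ℝ) ≤ (k2 : ℝ) := Nat.cast_le.mpr hcard
  have hcost : ∑ i ∈ Finset.range N,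
      (cA * heurAd α Λ q S L H (heurRep α w Λ q S L H R1 i)) ≤
      ∑ i ∈ Finset.range N, (cA * W i) := by
    rw [← Finset.mul_sum, ← Finset.mul_sum, hsumA, hsumW]
    exact mul_le_mul_of_nonneg_left (gapLH (k1 : ℝ) (k2 : ℝ) (N : ℝ) L H hk12 hLH.le) hcA
  have e1 : ∑ i ∈ Finset.range N, (p * S - c * S - cA * W i) =
      (N : ℝ) * (p * S - c * S) - ∑ i ∈ Finset.range N, (cA * W i) := by
    rw [Finset.sum_sub_distrib, Finset.sum_sub_distrib, Finset.sum_const,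
      Finset.sum_const, Finset.card_range, nsmul_eq_mul, nsmul_eq_mul]
    ring
  have e2 : ∑ i ∈ Finset.range N,
      (p * S - c * S - cA * heurAd α Λ q S L H (heurRep α w Λ q S L H R1 i)) =
      (N : ℝ) * (p * S - c * S) - ∑ i ∈ Finset.range N,
        (cA * heurAd α Λ q S L H (heurRep α w Λ q S L H R1 i)) := by
    rw [Finset.sum_sub_distrib, Finset.sum_sub_distrib, Finset.sum_const,
      Finset.sum_const, Finset.card_range, nsmul_eq_mul, nsmul_eq_mul]
    ring
  rw [hheur, e2]
  rw [e1] at hWle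
  linarith
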